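/- Let f : ℝⁿ → ℝ be symmetric, differentiable, and concave. Then for every λ ∈ ℝⁿ and all indices i ≠ j, (∂f/∂λᵢ(λ) − ∂f/∂λⱼ(λ)) · (λᵢ − λⱼ) ≤ 0. -/

import Mathlib

/-- If `f : ℝⁿ → ℝ` is symmetric, differentiable and concave, then for all
`λ ∈ ℝⁿ` and all `i ≠ j`, `(∂f/∂λᵢ(λ) − ∂f/∂λⱼ(λ)) · (λᵢ − λⱼ) ≤ 0`. -/
theorem concave_symmetric_divided_difference (n : ℕ) (f : (Fin n → ℝ) → ℝ)
    (hsym : ∀ (σ : Equiv.Perm (Fin n)) (x : Fin n → ℝ), f (x ∘ σ) = f x)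
    (hdiff : Differentiable ℝ f)
    (hconc : ConcaveOn ℝ Set.univ f)
    (lam : Fin n → ℝ) (i j : Fin n) (hij : i ≠ j) :
    (fderiv ℝ f lam (Pi.single i 1) - fderiv ℝ f lam (Pi.single j 1)) *
      (lam i - lam j) ≤ 0 := by
  set v : Fin n → ℝ :=
    (lam j - lam i) • (Pi.single i 1 : Fin n → ℝ) + (lam i - lam j) • (Pi.single j 1 : Fin n → ℝ) with hv
  -- key directional derivative fact: fderiv f lam v ≥ 0
  have hy : lam + v = lam ∘ (Equiv.swap i j) := by
    funext k
    simp only [hv, Pi.add_apply, Pi.smul_apply, smul_eq_mul, Function.comp_apply]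
    rcases eq_or_ne k i with rfl | hki
    · rw [Equiv.swap_apply_left]
      simp [Pi.single_apply, hij.symm]
    rcases eq_or_ne k j with rfl | hkj
    · rw [Equiv.swap_apply_right]
      simp [Pi.single_apply, hij]
    · rw [Equiv.swap_apply_of_ne_of_ne hki hkj]
      simp [Pi.single_apply, hki, hkj]
  set g : ℝ → ℝ := fun t => f (lam + t • v) with hg
  have hline : ∀ t : ℝ, HasDerivAt (fun s : ℝ => lam + s • v) v t := by
    intro t
    simpa using ((hasDerivAt_id t).smul_const v).const_add lam
  have hgd : HasDerivAt g (fderiv ℝ f lam v) 0 := by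
    have := (hdiff (lam + (0:ℝ) • v)).hasFDerivAt.comp_hasDerivAt 0 (hline 0)
    simp only [zero_smul, add_zero] at this
    exact this
  have hgconc : ConcaveOn ℝ Set.univ g := by
    have := hconc.comp_affineMap
      (AffineMap.lineMap lam (lam + v) : ℝ →ᵃ[ℝ] (Fin n → ℝ))
    have heq : (f ∘ (AffineMap.lineMap lam (lam + v) : ℝ →ᵃ[ℝ] (Fin n → ℝ))) = g := by
      funext t
      simp [hg, AffineMap.lineMap_apply, add_comm]
    simpa [heq] using this
  have hg1 : g 1 = g 0 := by
    simp only [hg, one_smul, zero_smul, add_zero, hy]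
    exact hsym (Equiv.swap i j) lam
  have hconvneg : ConvexOn ℝ Set.univ (fun t => -(g t)) := hgconc.neg
  have hnegd : HasDerivAt (fun t => -(g t)) (-(fderiv ℝ f lam v)) 0 := hgd.neg
  have hslope := hconvneg.le_slope_of_hasDerivAt (Set.mem_univ (0:ℝ)) (Set.mem_univ (1:ℝ))
    one_pos hnegd
  have h0 : 0 ≤ fderiv ℝ f lam v := by
    have : slope (fun t => -(g t)) 0 1 = -(g 1) + g 0 := by
      simp [slope_def_field, div_eq_iff]
    rw [this, hg1] at hslope
    linarith
  have hval : fderiv ℝ f lam v =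
      (lam j - lam i) * fderiv ℝ f lam (Pi.single i 1) +
        (lam i - lam j) * fderiv ℝ f lam (Pi.single j 1) := by
    rw [hv, map_add, map_smul, map_smul]
    simp [smul_eq_mul]
  rw [hval] at h0
  nlinarith [h0]
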